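/- Every maximal set of pairwise orthogonal positive roots in the root system D_n (n even, n = 2k ≥ 4) has the form {ε_{i_1} + ε_{j_1}, ε_{i_1} − ε_{j_1}, ..., ε_{i_k} + ε_{j_k}, ε_{i_k} − ε_{j_k}} where {{i_1,j_1},...,{i_k,j_k}} is a perfect matching of {1,...,n} with i_r < j_r for all r; consequently such maximal sets are in bijection with perfect matchings of {1,...,n}. -/

import Mathlib

namespace Stmt1Aux

variable {n : ℕ}

/-- `ε_i + ε_j` -/
def sp (i j : Fin n) : Fin n → ℝ := Pi.single i 1 + Pi.single j 1
/-- `ε_i - ε_j` -/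
def sm (i j : Fin n) : Fin n → ℝ := Pi.single i 1 - Pi.single j 1

lemma sp_comm (i j : Fin n) : sp i j = sp j i := by simp [sp, add_comm]

lemma sp_apply (i j m : Fin n) :
    sp i j m = (if m = i then (1:ℝ) else 0) + (if m = j then (1:ℝ) else 0) := by
  simp [sp, Pi.single_apply]

lemma sm_apply (i j m : Fin n) :
    sm i j m = (if m = i then (1:ℝ) else 0) - (if m = j then (1:ℝ) else 0) := by
  simp [sm, Pi.single_apply]

lemma dot_single (i : Fin n) (g : Fin n → ℝ) :
    ∑ m, (Pi.single i 1 : Fin n → ℝ) m * g m = g i := by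
  rw [Finset.sum_eq_single i]
  · simp
  · intro b _ hb; simp [Pi.single_apply, hb]
  · intro h; exact absurd (Finset.mem_univ i) h

lemma dot_sp (i j : Fin n) (g : Fin n → ℝ) : ∑ m, sp i j m * g m = g i + g j := by
  simp [sp, add_mul, Finset.sum_add_distrib, dot_single]

lemma dot_sm (i j : Fin n) (g : Fin n → ℝ) : ∑ m, sm i j m * g m = g i - g j := by
  simp [sm, sub_mul, Finset.sum_sub_distrib, dot_single]

set_option maxHeartbeats 1000000 in
lemma sp_inj {a b i j : Fin n} (hab : a < b) (hij : i < j) (h : sp a b = sp i j) :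
    a = i ∧ b = j := by
  have h1 := congrFun h a
  have h2 := congrFun h b
  have h3 := congrFun h i
  simp only [sp_apply] at h1 h2 h3
  split_ifs at h1 h2 h3 <;>
    first
      | (constructor <;> fin_omega)
      | (norm_num at h1; done)
      | (norm_num at h2; done)
      | (norm_num at h3; done)

set_option maxHeartbeats 1000000 in
lemma sm_inj {a b i j : Fin n} (hab : a < b) (hij : i < j) (h : sm a b = sm i j) :
    a = i ∧ b = j := by
  have h1 := congrFun h a
  have h2 := congrFun h b
  have h3 := congrFun h i
  simp only [sm_apply] at h1 h2 h3
  split_ifs at h1 h2 h3 <;>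
    first
      | (constructor <;> fin_omega)
      | (norm_num at h1; done)
      | (norm_num at h2; done)
      | (norm_num at h3; done)

lemma sp_ne_sm {a b i j : Fin n} (hab : a < b) (hij : i < j) : sp a b ≠ sm i j := by
  intro h
  have h1 := congrFun h j
  simp only [sp_apply, sm_apply] at h1
  split_ifs at h1 <;> first
      | fin_omega
      | norm_num at h1

lemma sp_ne_sp_right {i j j' : Fin n} (hj : i ≠ j) (hjj' : j ≠ j') : sp i j ≠ sp i j' := by
  intro h
  have h1 := congrFun h j
  simp only [sp_apply] at h1
  split_ifs at h1 <;> first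
      | fin_omega
      | norm_num at h1

/-- the partner function extracted from `R` -/
noncomputable def pick (R : Set (Fin n → ℝ)) (i : Fin n) : Fin n :=
  open Classical in if h : ∃ j, i ≠ j ∧ sp i j ∈ R then h.choose else i

lemma pick_mem {R : Set (Fin n → ℝ)} {i : Fin n} (h : ∃ j, i ≠ j ∧ sp i j ∈ R) :
    i ≠ pick R i ∧ sp i (pick R i) ∈ R := by
  rw [pick, dif_pos h]; exact h.choose_spec

lemma pick_fix {R : Set (Fin n → ℝ)} {i : Fin n} (h : ¬ ∃ j, i ≠ j ∧ sp i j ∈ R) :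
    pick R i = i := dif_neg h

end Stmt1Aux

open Stmt1Aux in
/-- Every maximal set of pairwise orthogonal positive roots of `D_n` (`n = 2k ≥ 4`)
comes from a unique perfect matching of `{1,…,n}`: it consists of the roots
`ε_i + ε_j, ε_i − ε_j` for the blocks `{i,j}` (`i < j`) of the matching; hence such
maximal sets are in bijection with perfect matchings (encoded as fixed-point-free
involutions). -/
theorem stmt1 (k : ℕ) (hk : 2 ≤ k) (n : ℕ) (hn : n = 2 * k)
    (Pos : Set (Fin n → ℝ))
    (hPos : Pos = {v | ∃ i j : Fin n, i < j ∧
      (v = (Pi.single i 1 : Fin n → ℝ) + (Pi.single j 1 : Fin n → ℝ) ∨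
       v = (Pi.single i 1 : Fin n → ℝ) - (Pi.single j 1 : Fin n → ℝ))})
    (R : Set (Fin n → ℝ))
    (hsub : R ⊆ Pos)
    (horth : ∀ α ∈ R, ∀ β ∈ R, α ≠ β → (∑ m, α m * β m) = 0)
    (hmax : ∀ γ ∈ Pos, γ ∉ R → ∃ α ∈ R, (∑ m, α m * γ m) ≠ 0) :
    ∃! f : Fin n → Fin n, Function.Involutive f ∧ (∀ i, f i ≠ i) ∧
      R = {v | ∃ i j : Fin n, i < j ∧ f i = j ∧
        (v = (Pi.single i 1 : Fin n → ℝ) + (Pi.single j 1 : Fin n → ℝ) ∨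
         v = (Pi.single i 1 : Fin n → ℝ) - (Pi.single j 1 : Fin n → ℝ))} := by
  classical
  -- every element of `R` is a root
  have hform : ∀ v ∈ R, ∃ i j, i < j ∧ (v = sp i j ∨ v = sm i j) := by
    intro v hv
    have h := hsub hv
    rw [hPos] at h
    exact h
  -- `sp i j ∈ R ↔ sm i j ∈ R` (for i < j), by maximality
  have closure1 : ∀ i j : Fin n, i < j → sp i j ∈ R → sm i j ∈ R := by
    intro i j hij hsp
    by_contra hsm
    have hPosm : sm i j ∈ Pos := by rw [hPos]; exact ⟨i, j, hij, Or.inr rfl⟩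
    obtain ⟨α, hα, hdot⟩ := hmax _ hPosm hsm
    obtain ⟨a, b, hab, hf⟩ := hform α hα
    rcases hf with rfl | rfl
    · by_cases heq : sp a b = sp i j
      · rw [heq, dot_sp] at hdot
        exact hdot (by norm_num [sm_apply, hij.ne, hij.ne'])
      · have h0 := horth _ hα _ hsp heq
        rw [dot_sp] at h0
        rw [dot_sp] at hdot
        simp only [sp_apply, sm_apply] at h0 hdot
        split_ifs at h0 hdot <;> first
          | (apply hdot; norm_num; done)
          | (norm_num at h0; done)
          | fin_omega
          | (exact heq (by
              have e1 : a = i := by fin_omega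
              have e2 : b = j := by fin_omega
              rw [e1, e2]))
    · by_cases heq : sm a b = sm i j
      · exact hsm (heq ▸ hα)
      · have h0 := horth _ hα _ hsp (by
          intro hc
          exact sp_ne_sm hij hab hc.symm)
        rw [dot_sm] at h0
        rw [dot_sm] at hdot
        simp only [sp_apply, sm_apply] at h0 hdot
        split_ifs at h0 hdot <;> first
          | (apply hdot; norm_num; done)
          | (norm_num at h0; done)
          | fin_omega
          | (exact heq (by
              have e1 : a = i := by fin_omega
              have e2 : b = j := by fin_omega
              rw [e1, e2]))
  have closure2 : ∀ i j : Fin n, i < j → sm i j ∈ R → sp i j ∈ R := by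
    intro i j hij hsm
    by_contra hsp
    have hPosp : sp i j ∈ Pos := by rw [hPos]; exact ⟨i, j, hij, Or.inl rfl⟩
    obtain ⟨α, hα, hdot⟩ := hmax _ hPosp hsp
    obtain ⟨a, b, hab, hf⟩ := hform α hα
    rcases hf with rfl | rfl
    · by_cases heq : sp a b = sp i j
      · exact hsp (heq ▸ hα)
      · have h0 := horth _ hα _ hsm (sp_ne_sm hab hij)
        rw [dot_sp] at h0
        rw [dot_sp] at hdot
        simp only [sp_apply, sm_apply] at h0 hdot
        split_ifs at h0 hdot <;> first
          | (apply hdot; norm_num; done)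
          | (norm_num at h0; done)
          | fin_omega
          | (exact heq (by
              have e1 : a = i := by fin_omega
              have e2 : b = j := by fin_omega
              rw [e1, e2]))
    · by_cases heq : sm a b = sm i j
      · rw [heq, dot_sm] at hdot
        exact hdot (by norm_num [sp_apply, hij.ne, hij.ne'])
      · have h0 := horth _ hα _ hsm heq
        rw [dot_sm] at h0
        rw [dot_sm] at hdot
        simp only [sp_apply, sm_apply] at h0 hdot
        split_ifs at h0 hdot <;> first
          | (apply hdot; norm_num; done)
          | (norm_num at h0; done)
          | fin_omega
          | (exact heq (by
              have e1 : a = i := by fin_omega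
              have e2 : b = j := by fin_omega
              rw [e1, e2]))
  -- uniqueness of partners
  have uniq : ∀ i j j' : Fin n, i ≠ j → i ≠ j' → sp i j ∈ R → sp i j' ∈ R → j = j' := by
    intro i j j' hij hij' hj hj'
    by_contra hne
    have h0 := horth _ hj _ hj' (sp_ne_sp_right hij hne)
    rw [dot_sp] at h0
    simp only [sp_apply] at h0
    split_ifs at h0 <;> first
      | norm_num at h0
      | fin_omega
  set g := pick R with hg
  have hgspec : ∀ i j : Fin n, i ≠ j → sp i j ∈ R → g i = j := by
    intro i j hij hR
    have hex : ∃ j, i ≠ j ∧ sp i j ∈ R := ⟨j, hij, hR⟩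
    obtain ⟨h1, h2⟩ := pick_mem (R := R) hex
    exact uniq i (g i) j h1 hij h2 hR
  have hcovmem : ∀ i : Fin n, g i ≠ i → i ≠ g i ∧ sp i (g i) ∈ R := by
    intro i h
    by_cases hex : ∃ j, i ≠ j ∧ sp i j ∈ R
    · exact pick_mem hex
    · exact absurd (pick_fix hex) h
  have hinv : Function.Involutive g := by
    intro i
    by_cases hex : ∃ j, i ≠ j ∧ sp i j ∈ R
    · obtain ⟨h1, h2⟩ := pick_mem (R := R) hex
      exact hgspec (g i) i (Ne.symm h1) (sp_comm i (g i) ▸ h2)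
    · rw [hg] at *
      rw [pick_fix hex, pick_fix hex]
  -- no fixed points, by a parity argument
  have hunc : ∀ i : Fin n, g i = i → ∀ j, i ≠ j → sp i j ∉ R := by
    intro i hgi j hne hR
    exact hne ((hgi.symm).trans (hgspec i j hne hR))
  have hnofix : ∀ i, g i ≠ i := by
    intro i hgi
    haveI : Fact (Nat.Prime 2) := ⟨Nat.prime_two⟩
    have hf2 : (show Function.End (Fin n) from g) ^ 2 ^ 1 = 1 := by
      have h2 : (show Function.End (Fin n) from g) ^ 2 ^ 1 =
          (show Function.End (Fin n) from g) * (show Function.End (Fin n) from g) := by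
        norm_num [pow_two]
        exact pow_two _
      rw [h2, Function.End.mul_def, Function.End.one_def]
      funext x
      exact hinv x
    have hcard := Equiv.Perm.card_fixedPoints_modEq (p := 2) (n := 1) hf2
    have hc2 : n % 2 = Fintype.card (Function.fixedPoints g) % 2 := by
      simpa [Fintype.card_fin, Nat.ModEq] using hcard
    have hmem : i ∈ Function.fixedPoints g := hgi
    have hpos : 0 < Fintype.card (Function.fixedPoints g) :=
      Fintype.card_pos_iff.mpr ⟨⟨i, hmem⟩⟩
    have hlt : 1 < Fintype.card (Function.fixedPoints g) := by omega
    obtain ⟨⟨j, hgj⟩, hne⟩ := Fintype.exists_ne_of_one_lt_card hlt ⟨i, hmem⟩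
    have hji : j ≠ i := fun h => hne (Subtype.ext h)
    have huncj : ∀ m, j ≠ m → sp j m ∉ R := hunc j hgj
    have hunci : ∀ m, i ≠ m → sp i m ∉ R := hunc i hgi
    obtain ⟨x, y, hxy, hxu, hyu⟩ :
        ∃ x y : Fin n, x < y ∧ (∀ m, x ≠ m → sp x m ∉ R) ∧ (∀ m, y ≠ m → sp y m ∉ R) := by
      rcases lt_trichotomy i j with h | h | h
      · exact ⟨i, j, h, hunci, huncj⟩
      · exact absurd h.symm hji
      · exact ⟨j, i, h, huncj, hunci⟩
    have hγPos : sp x y ∈ Pos := by rw [hPos]; exact ⟨x, y, hxy, Or.inl rfl⟩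
    have hγR : sp x y ∉ R := hxu y (ne_of_lt hxy)
    obtain ⟨α, hα, hdot⟩ := hmax _ hγPos hγR
    obtain ⟨a, b, hab, hf⟩ := hform α hα
    have hsab : sp a b ∈ R := by
      rcases hf with rfl | rfl
      · exact hα
      · exact closure2 a b hab hα
    have hax : a ≠ x := fun h => hxu b (h ▸ (ne_of_lt hab)) (h ▸ hsab)
    have hay : a ≠ y := fun h => hyu b (h ▸ (ne_of_lt hab)) (h ▸ hsab)
    have hbx : b ≠ x := fun h =>
      hxu a (h ▸ (ne_of_gt hab)) (h ▸ (sp_comm a b ▸ hsab))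
    have hby : b ≠ y := fun h =>
      hyu a (h ▸ (ne_of_gt hab)) (h ▸ (sp_comm a b ▸ hsab))
    rcases hf with rfl | rfl
    · rw [dot_sp] at hdot
      simp only [sp_apply, if_neg hax, if_neg hay, if_neg hbx, if_neg hby] at hdot
      exact hdot (by ring)
    · rw [dot_sm] at hdot
      simp only [sp_apply, if_neg hax, if_neg hay, if_neg hbx, if_neg hby] at hdot
      exact hdot (by ring)
  -- description of R
  have hRdesc : R = {v | ∃ i j : Fin n, i < j ∧ g i = j ∧ (v = sp i j ∨ v = sm i j)} := by
    ext v
    constructor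
    · intro hv
      obtain ⟨i, j, hij, hf⟩ := hform v hv
      have hsp : sp i j ∈ R := by
        rcases hf with rfl | rfl
        · exact hv
        · exact closure2 i j hij hv
      exact ⟨i, j, hij, hgspec i j (ne_of_lt hij) hsp, hf⟩
    · rintro ⟨i, j, hij, hgi, hf⟩
      have hgne : g i ≠ i := by rw [hgi]; exact (ne_of_gt hij)
      obtain ⟨h1, h2⟩ := hcovmem i hgne
      rw [hgi] at h2
      rcases hf with rfl | rfl
      · exact h2
      · exact closure1 i j hij h2
  refine ⟨g, ⟨hinv, hnofix, ?_⟩, ?_⟩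
  · exact hRdesc
  · rintro f' ⟨hinv', hnofix', hR'⟩
    funext i
    have hRg : R = {v | ∃ i j : Fin n, i < j ∧ g i = j ∧ (v = sp i j ∨ v = sm i j)} := hRdesc
    rcases lt_trichotomy i (f' i) with h | h | h
    · have hmem : sp i (f' i) ∈ R := by
        rw [hR']
        exact ⟨i, f' i, h, rfl, Or.inl rfl⟩
      exact (hgspec i (f' i) (ne_of_lt h) hmem).symm
    · exact absurd h.symm (hnofix' i)
    · have hmem : sp (f' i) i ∈ R := by
        rw [hR']
        exact ⟨f' i, i, h, hinv' i, Or.inl rfl⟩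
      exact (hgspec i (f' i) (ne_of_gt h) (sp_comm (f' i) i ▸ hmem)).symm
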